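/- For a Σ⁰₂-type formula ∀x ∃y > x, P(y) with P : ℕ → Prop decidable: the formula ∀x ∃y > x, P(y) is true iff for every a there exists b > a such that ∃y, a ≤ y < b ∧ P(y); moreover if the formula is true then for every valid notion R of 0-estimators there exists (a,b) ∈ R with ∃y, a ≤ y < b ∧ P(y) — indeed every (a,b) ∈ R with the threshold function chosen appropriately witnesses this. -/

import Mathlib

/-- A set `R ⊆ ℕ × ℕ` is a valid notion of 0-estimators. -/
def Valid0 (R : Set (ℕ × ℕ)) : Prop :=
  ∃ amin : ℕ, ∃ f : ℕ → ℕ, ∀ a b : ℕ, (a, b) ∈ R ↔ amin ≤ a ∧ f a ≤ b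

/-- The formula `∀x ∃y > x, P y` passes the 0-estimator `(a, b)`. -/
def Passes (P : ℕ → Prop) (p : ℕ × ℕ) : Prop :=
  ∃ y : ℕ, p.1 ≤ y ∧ y < p.2 ∧ P y

/-- For decidable `P`: the formula `∀x ∃y > x, P y` is true iff for every `a` some
`(a, b)` with `b > a` is passed; moreover, if it is true then every valid notion of
0-estimators contains a passed estimator, and indeed (with the threshold function chosen
appropriately) there is a valid notion all of whose members are passed. -/
theorem sigma02_passes (P : ℕ → Prop) [DecidablePred P] :
    ((∀ x : ℕ, ∃ y, x < y ∧ P y) ↔ ∀ a : ℕ, ∃ b, a < b ∧ Passes P (a, b)) ∧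
    ((∀ x : ℕ, ∃ y, x < y ∧ P y) → ∀ R : Set (ℕ × ℕ), Valid0 R → ∃ p ∈ R, Passes P p) ∧
    ((∀ x : ℕ, ∃ y, x < y ∧ P y) → ∃ R : Set (ℕ × ℕ), Valid0 R ∧ ∀ p ∈ R, Passes P p) := by
  refine ⟨⟨fun h a => ?_, fun h x => ?_⟩, fun h R hR => ?_, fun h => ?_⟩
  · obtain ⟨y, hy, hPy⟩ := h a
    exact ⟨y + 1, by omega, y, by omega, by omega, hPy⟩
  · obtain ⟨b, _, y, hy1, _, hPy⟩ := h (x + 1)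
    exact ⟨y, by omega, hPy⟩
  · obtain ⟨amin, f, hRf⟩ := hR
    obtain ⟨y, hy, hPy⟩ := h amin
    refine ⟨(amin, max (f amin) (y + 1)), (hRf _ _).2 ⟨le_refl _, le_max_left _ _⟩,
      y, by omega, lt_of_lt_of_le (by omega) (le_max_right _ _), hPy⟩
  · have h' : ∀ a : ℕ, ∃ y, a ≤ y ∧ P y := fun a => by
      obtain ⟨y, hy, hPy⟩ := h a; exact ⟨y, by omega, hPy⟩
    refine ⟨{p | Nat.find (h' p.1) + 1 ≤ p.2}, ⟨0, fun a => Nat.find (h' a) + 1,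
      fun a b => by simp [Set.mem_setOf_eq]⟩, ?_⟩
    rintro ⟨a, b⟩ hp
    exact ⟨Nat.find (h' a), (Nat.find_spec (h' a)).1, by change Nat.find (h' a) + 1 ≤ b at hp; exact hp,
      (Nat.find_spec (h' a)).2⟩
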